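/- arXiv:2605.23603 — 4 statements merged into one kernel-verified Lean document; each statement's English description precedes it below -/
import Mathlib

section
/- Let α > β be real thresholds, u : ℕ → ℝ a sequence, and m an index such that u(m) ≥ u(j) for all j ≤ m (u(m) is a running maximum). Then R_{α,β}[u](m) = 1 if and only if u(m) ≥ α. Consequently, if w : ℕ → ℝ is another sequence with w(j) = u(j) for all m ≤ j ≤ n and w(m) ≥ w(j) for all j ≤ m, then R_{α,β}[u](n) = R_{α,β}[w](n) for every n ≥ m: the relay state after a running maximum depends only on the values from that maximum onward (the wiping property). -/
/-- The elementary relay `R_{α,β}` of Preisach hysteresis theory. -/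
noncomputable def relay (α β : ℝ) (u : ℕ → ℝ) : ℕ → ℝ
  | 0 => if u 0 ≥ α then 1 else 0
  | n + 1 => if u (n + 1) ≥ α then 1 else if u (n + 1) ≤ β then 0 else relay α β u n

lemma relay_one_exists (α β : ℝ) (u : ℕ → ℝ) :
    ∀ k, relay α β u k = 1 → ∃ j ≤ k, α ≤ u j := by
  intro k
  induction k with
  | zero =>
    intro h
    simp only [relay] at h
    split at h
    · exact ⟨0, le_refl _, ‹_›⟩
    · norm_num at h
  | succ n ih =>
    intro h
    simp only [relay] at h
    split at h
    · exact ⟨n + 1, le_refl _, ‹_›⟩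
    · split at h
      · norm_num at h
      · obtain ⟨j, hj, hju⟩ := ih h
        exact ⟨j, le_trans hj (Nat.le_succ _), hju⟩

lemma relay_eq_one_of_ge (α β : ℝ) (u : ℕ → ℝ) (k : ℕ) (h : α ≤ u k) :
    relay α β u k = 1 := by
  cases k <;> simp [relay, h]

lemma relay_zero_or_one (α β : ℝ) (u : ℕ → ℝ) :
    ∀ k, relay α β u k = 0 ∨ relay α β u k = 1 := by
  intro k
  induction k with
  | zero => simp only [relay]; split <;> simp
  | succ n ih => simp only [relay]; split; · simp
                 split; · simp
                 exact ih

lemma relay_at_max (α β : ℝ) (u : ℕ → ℝ) (m : ℕ)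
    (hmax : ∀ j ≤ m, u j ≤ u m) : relay α β u m = 1 ↔ u m ≥ α := by
  constructor
  · intro h
    obtain ⟨j, hj, hju⟩ := relay_one_exists α β u m h
    exact le_trans hju (hmax j hj)
  · exact relay_eq_one_of_ge α β u m

/-- The wiping property: at a running maximum `m` the relay state is `1` iff `u m ≥ α`,
and consequently the relay state at any later time `n ≥ m` depends only on the values
of the input from the running maximum onward. -/
theorem relay_wiping (α β : ℝ) (hαβ : α > β) (u : ℕ → ℝ) (m : ℕ)
    (hmax : ∀ j ≤ m, u j ≤ u m) :
    (relay α β u m = 1 ↔ u m ≥ α) ∧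
      ∀ (w : ℕ → ℝ) (n : ℕ), m ≤ n →
        (∀ j, m ≤ j → j ≤ n → w j = u j) →
        (∀ j ≤ m, w j ≤ w m) →
        relay α β u n = relay α β w n := by
  refine ⟨relay_at_max α β u m hmax, ?_⟩
  intro w n hmn hw hwmax
  induction n with
  | zero =>
    have hm0 : m = 0 := Nat.le_zero.mp hmn
    subst hm0
    have hw0 : w 0 = u 0 := hw 0 (le_refl _) (le_refl _)
    simp [relay, hw0]
  | succ n ih =>
    rcases Nat.lt_or_ge m (n + 1) with hlt | hge
    · have hmn' : m ≤ n := Nat.lt_succ_iff.mp hlt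
      have := ih hmn' (fun j hj hjn => hw j hj (le_trans hjn (Nat.le_succ _)))
      have heq : w (n + 1) = u (n + 1) := hw (n + 1) (le_of_lt hlt) (le_refl _)
      simp only [relay, heq, this]
    · have hm : m = n + 1 := le_antisymm hmn hge
      subst hm
      have heq : w (n + 1) = u (n + 1) := hw (n + 1) (le_refl _) (le_refl _)
      have h1 := relay_at_max α β u (n + 1) hmax
      have h2 := relay_at_max α β w (n + 1) hwmax
      rcases relay_zero_or_one α β u (n + 1) with h | h <;>
        rcases relay_zero_or_one α β w (n + 1) with h' | h' <;>
        rw [h, h']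
      · exfalso
        have := h1.mpr (heq ▸ h2.mp h')
        rw [h] at this; norm_num at this
      · exfalso
        have := h2.mpr (heq ▸ h1.mp h)
        rw [h'] at this; norm_num at this
end

section
/- Let u : ℕ → ℝ be a sequence and p ≥ 1 an index that is not a strict local extremum, i.e. u(p−1) ≤ u(p) ≤ u(p+1) or u(p−1) ≥ u(p) ≥ u(p+1). Let u' be the sequence obtained from u by deleting position p (u'(j) = u(j) for j < p and u'(j) = u(j+1) for j ≥ p). Then for all real thresholds α > β and all n ≥ p+1, R_{α,β}[u](n) = R_{α,β}[u'](n−1): deleting a non-extremal point does not change any relay state at later times (the extremum stack is a sufficient statistic for all relays). -/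
lemma relay_of_ge (α β : ℝ) (u : ℕ → ℝ) (n : ℕ) (h : u n ≥ α) : relay α β u n = 1 := by
  cases n with
  | zero => simp only [relay]; rw [if_pos h]
  | succ m => simp only [relay]; rw [if_pos h]

lemma relay_of_le (α β : ℝ) (hαβ : α > β) (u : ℕ → ℝ) (n : ℕ) (h : u n ≤ β) :
    relay α β u n = 0 := by
  cases n with
  | zero => simp only [relay]; rw [if_neg (by linarith)]
  | succ m => simp only [relay]; rw [if_neg (by linarith), if_pos h]

lemma relay_congr (α β : ℝ) (u v : ℕ → ℝ) (n : ℕ) (h : ∀ i ≤ n, u i = v i) :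
    relay α β u n = relay α β v n := by
  induction n with
  | zero => simp only [relay, h 0 le_rfl]
  | succ m ih =>
    simp only [relay, h (m + 1) le_rfl]
    rw [ih (fun i hi => h i (hi.trans (Nat.le_succ m)))]

/-- Deleting a non-extremal point of the input does not change any relay state at later
times: the extremum stack is a sufficient statistic for all relays. -/
theorem relay_delete_nonextremal (u : ℕ → ℝ) (p : ℕ) (hp : 1 ≤ p)
    (hnonext : (u (p - 1) ≤ u p ∧ u p ≤ u (p + 1)) ∨
               (u (p - 1) ≥ u p ∧ u p ≥ u (p + 1))) :
    ∀ α β : ℝ, α > β → ∀ n, p + 1 ≤ n →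
      relay α β u n = relay α β (fun j => if j < p then u j else u (j + 1)) (n - 1) := by
  intro α β hαβ
  set v : ℕ → ℝ := fun j => if j < p then u j else u (j + 1) with hv
  have hvlt : ∀ j, j < p → v j = u j := fun j hj => by simp [hv, hj]
  have hvge : ∀ j, p ≤ j → v j = u (j + 1) := fun j hj => by
    simp [hv, Nat.not_lt.mpr hj]
  intro n hn
  induction n, hn using Nat.le_induction with
  | base =>
    obtain ⟨q, rfl⟩ : ∃ q, p = q + 1 := ⟨p - 1, (Nat.succ_pred_eq_of_pos hp).symm⟩
    simp only [Nat.add_sub_cancel] at *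
    have hrc : relay α β v q = relay α β u q :=
      relay_congr α β v u q (fun i hi => hvlt i (Nat.lt_succ_of_le hi))
    have hv1 : v (q + 1) = u (q + 2) := hvge (q + 1) le_rfl
    simp only [relay, hv1]
    by_cases h1 : u (q + 2) ≥ α
    · rw [if_pos h1, if_pos h1]
    · rw [if_neg h1, if_neg h1]
      by_cases h2 : u (q + 2) ≤ β
      · rw [if_pos h2, if_pos h2]
      · rw [if_neg h2, if_neg h2, hrc]
        push_neg at h1 h2
        rcases hnonext with ⟨ha, hb⟩ | ⟨ha, hb⟩
        · -- u q ≤ u (q+1) ≤ u (q+2) < α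
          rw [if_neg (by linarith : ¬ u (q + 1) ≥ α)]
          by_cases h3 : u (q + 1) ≤ β
          · rw [if_pos h3, (relay_of_le α β hαβ u q (by linarith)).symm]
          · rw [if_neg h3]
        · -- β < u (q+2) ≤ u (q+1) ≤ u q
          by_cases h3 : u (q + 1) ≥ α
          · rw [if_pos h3, (relay_of_ge α β u q (by linarith)).symm]
          · rw [if_neg h3, if_neg (by linarith : ¬ u (q + 1) ≤ β)]
  | succ m hm ih =>
    obtain ⟨k, rfl⟩ : ∃ k, m = k + 1 := ⟨m - 1, (Nat.succ_pred_eq_of_pos (by omega)).symm⟩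
    simp only [Nat.add_sub_cancel] at *
    have hvk : v (k + 1) = u (k + 2) := hvge (k + 1) (by omega)
    rw [show relay α β u (k + 1 + 1) =
          if u (k + 2) ≥ α then 1 else if u (k + 2) ≤ β then 0 else relay α β u (k + 1) from rfl,
        show relay α β v (k + 1) =
          if v (k + 1) ≥ α then 1 else if v (k + 1) ≤ β then 0 else relay α β v k from rfl,
        hvk, ih]
end

section
/- Let δ > 0, L ≥ 1 an integer, and u : ℕ → ℝ a sequence whose values all lie in the grid {0, δ, 2δ, …, Lδ}. Then for every n, Σ_{j=1}^{L} δ · R_{jδ, −δ}[u](n) = max_{t ≤ n} u(t): a single-layer Preisach Attention Layer with L relays computes the historical (running) maximum of the input exactly. -/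
/-- A single-layer Preisach Attention Layer with `L` relays computes the historical
(running) maximum of a grid-valued input exactly. -/
theorem PAL_computes_running_max (δ : ℝ) (hδ : 0 < δ) (L : ℕ) (hL : 1 ≤ L)
    (u : ℕ → ℝ) (hu : ∀ t, ∃ j ≤ L, u t = (j : ℝ) * δ) (n : ℕ) :
    ∑ j ∈ Finset.Icc 1 L, δ * relay ((j : ℝ) * δ) (-δ) u n =
      (Finset.range (n + 1)).sup' (Finset.nonempty_range_iff.mpr (Nat.succ_ne_zero n)) u := by
  classical
  have hnn : ∀ t, 0 ≤ u t := by
    intro t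
    obtain ⟨j, _, hj⟩ := hu t
    rw [hj]
    positivity
  have hrelay : ∀ (α : ℝ) (m : ℕ), 0 < α →
      relay α (-δ) u m = if ∃ t ∈ Finset.range (m + 1), α ≤ u t then 1 else 0 := by
    intro α m hα
    induction m with
    | zero =>
      simp only [relay, Finset.mem_range]
      congr 1
      simp only [eq_iff_iff, ge_iff_le]
      constructor
      · intro h; exact ⟨0, by norm_num, h⟩
      · rintro ⟨t, ht, h⟩; interval_cases t; exact h
    | succ m ih =>
      have hnot : ¬ u (m + 1) ≤ -δ := by
        have := hnn (m + 1); linarith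
      rw [relay, if_neg hnot, ih]
      by_cases h : u (m + 1) ≥ α
      · rw [if_pos h, if_pos ⟨m + 1, by simp, h⟩]
      · rw [if_neg h]
        by_cases hex : ∃ t ∈ Finset.range (m + 1), α ≤ u t
        · have hex' : ∃ t ∈ Finset.range (m + 1 + 1), α ≤ u t := by
            obtain ⟨t, ht, hle⟩ := hex
            simp only [Finset.mem_range] at ht ⊢
            exact ⟨t, by omega, hle⟩
          rw [if_pos hex, if_pos hex']
        · have hex' : ¬ ∃ t ∈ Finset.range (m + 1 + 1), α ≤ u t := by
            rintro ⟨t, ht, hle⟩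
            simp only [Finset.mem_range] at ht
            rcases Nat.lt_succ_iff_lt_or_eq.mp ht with h' | h'
            · exact hex ⟨t, Finset.mem_range.mpr h', hle⟩
            · exact h (h' ▸ hle)
          rw [if_neg hex, if_neg hex']
  set H := Finset.nonempty_range_iff.mpr (Nat.succ_ne_zero n)
  set M := (Finset.range (n + 1)).sup' H u with hM
  obtain ⟨t₀, ht₀, hMt⟩ := Finset.exists_mem_eq_sup' H u
  obtain ⟨k, hkL, hk⟩ := hu t₀
  have hMk : M = (k : ℝ) * δ := by rw [hM, hMt, hk]
  have hstep : ∀ j ∈ Finset.Icc 1 L,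
      δ * relay ((j : ℝ) * δ) (-δ) u n = if j ≤ k then δ else 0 := by
    intro j hj
    simp only [Finset.mem_Icc] at hj
    have hjpos : 0 < (j : ℝ) * δ := by
      have : (1 : ℝ) ≤ (j : ℝ) := by exact_mod_cast hj.1
      nlinarith
    rw [hrelay _ n hjpos]
    have hiff : (∃ t ∈ Finset.range (n + 1), (j : ℝ) * δ ≤ u t) ↔ j ≤ k := by
      constructor
      · rintro ⟨t, ht, hle⟩
        have : u t ≤ M := Finset.le_sup' u ht
        have : (j : ℝ) * δ ≤ (k : ℝ) * δ := by rw [← hMk]; linarith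
        have := le_of_mul_le_mul_right this hδ
        exact_mod_cast this
      · intro hjk
        refine ⟨t₀, ht₀, ?_⟩
        rw [hk]
        have : (j : ℝ) ≤ (k : ℝ) := by exact_mod_cast hjk
        nlinarith
    by_cases h : j ≤ k
    · rw [if_pos (hiff.mpr h), if_pos h, mul_one]
    · rw [if_neg (fun hx => h (hiff.mp hx)), if_neg h, mul_zero]
  rw [Finset.sum_congr rfl hstep, ← Finset.sum_filter]
  have hfilter : (Finset.Icc 1 L).filter (· ≤ k) = Finset.Icc 1 k := by
    ext j
    simp only [Finset.mem_filter, Finset.mem_Icc]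
    omega
  rw [hfilter, Finset.sum_const, Nat.card_Icc, hMk]
  push_cast
  ring
end

section
/- Let ε be a real with 0 < 2ε < Δ. Then for all i, j ∈ {1, …, k} and all d with d+1 ≤ D_max, code(i, d+1) + ε < code(j, d) − ε: the PUSH signal emitted at depth d+1 (the code plus ε) stays strictly below even the lower emission (code minus ε) of any symbol at depth d, so pushing a new element never exceeds the current top-of-stack maximum and never triggers wiping. -/
/-- The Cantor-depth encoding of a symbol index `i` at stack depth `d`,
for alphabet size `k`, depth bound `Dmax` and resolution `Δ`:
`code(i, d) = Dmax·(k+1)·Δ − (d·(k+1) + i)·Δ`. -/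
def code (k Dmax : ℕ) (Δ : ℝ) (i d : ℕ) : ℝ :=
  (Dmax : ℝ) * ((k : ℝ) + 1) * Δ - (((d : ℝ) * ((k : ℝ) + 1) + (i : ℝ)) * Δ)

/-- With `0 < 2ε < Δ`, the PUSH signal `code(i, d+1) + ε` emitted at depth `d+1` stays
strictly below even the lower emission `code(j, d) − ε` of any symbol at depth `d`:
pushing never exceeds the current top-of-stack maximum and never triggers wiping. -/
theorem push_below_top (k Dmax : ℕ) (hk : 1 ≤ k) (Δ ε : ℝ)
    (hε : 0 < 2 * ε) (hεΔ : 2 * ε < Δ)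
    (i j : ℕ) (hi : 1 ≤ i ∧ i ≤ k) (hj : 1 ≤ j ∧ j ≤ k)
    (d : ℕ) (hd : d + 1 ≤ Dmax) :
    code k Dmax Δ i (d + 1) + ε < code k Dmax Δ j d - ε := by
  obtain ⟨hi1, hik⟩ := hi
  obtain ⟨hj1, hjk⟩ := hj
  have hi1' : (1 : ℝ) ≤ i := by exact_mod_cast hi1
  have hjk' : (j : ℝ) ≤ k := by exact_mod_cast hjk
  unfold code
  push_cast
  nlinarith [hi1', hjk', hε, hεΔ]
end
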